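/- If the clustering-difference graph CDG(C, C') decomposes into pairwise vertex-disjoint directed cycles and t ≥ 1 pairwise vertex-disjoint directed paths (all cycles and paths mutually vertex-disjoint), then d(C, C') ≤ max{2, t}. -/

import Mathlib

variable {X : Type*} [Fintype X] [DecidableEq X] {k : ℕ}

/-- The clustering-difference graph `CDG(c, c'')` (one edge `c x → c'' x` for each
item `x` with `c x ≠ c'' x`) is a single directed cycle: there are `m + 1` distinct
cluster indices `v 0, ..., v m` and the items moved are exactly one per edge
`v i → v (i+1)` (indices mod `m + 1`). -/
def IsCyclicalMove (c c'' : X → Fin k) : Prop :=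
  ∃ (m : ℕ) (v : Fin (m + 1) ↪ Fin k)
    (e : {x : X // c x ≠ c'' x} ≃ Fin (m + 1)),
    ∀ x : {x : X // c x ≠ c'' x}, c x.1 = v (e x) ∧ c'' x.1 = v (e x + 1)

/-- The clustering-difference graph `CDG(c, c'')` is a single directed path: there
are `m + 2` distinct cluster indices `v 0, ..., v (m+1)` and the items moved are
exactly one per edge `v i → v (i+1)`, `0 ≤ i ≤ m`. -/
def IsSequentialMove (c c'' : X → Fin k) : Prop :=
  ∃ (m : ℕ) (v : Fin (m + 2) ↪ Fin k)
    (e : {x : X // c x ≠ c'' x} ≃ Fin (m + 1)),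
    ∀ x : {x : X // c x ≠ c'' x}, c x.1 = v (e x).castSucc ∧ c'' x.1 = v (e x).succ

/-- An elementary move: a cyclical or a sequential move. -/
def IsMove (c c'' : X → Fin k) : Prop :=
  IsCyclicalMove c c'' ∨ IsSequentialMove c c''

/-- The transformation distance: the minimum number of elementary moves needed to
transform `c` into `c'`. -/
noncomputable def transDist (c c' : X → Fin k) : ℕ :=
  sInf {n | ∃ f : ℕ → X → Fin k, f 0 = c ∧ f n = c' ∧ ∀ i < n, IsMove (f i) (f (i + 1))}

/-- The size of cluster `i` in the clustering `c`. -/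
def clusterSize (c : X → Fin k) (i : Fin k) : ℕ :=
  (Finset.univ.filter fun x => c x = i).card

/-- The outdegree of vertex `i` in `CDG(c, c')`. -/
def cdgOutdeg (c c' : X → Fin k) (i : Fin k) : ℕ :=
  (Finset.univ.filter fun x => c x = i ∧ c' x ≠ i).card

/-- The indegree of vertex `i` in `CDG(c, c')`. -/
def cdgIndeg (c c' : X → Fin k) (i : Fin k) : ℕ :=
  (Finset.univ.filter fun x => c' x = i ∧ c x ≠ i).card

/-- The shared degree of vertex `i` in `CDG(c, c')`. -/
def sharedDeg (c c' : X → Fin k) (i : Fin k) : ℕ :=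
  min (cdgIndeg c c' i) (cdgOutdeg c c' i)

/-- The edges of `CDG(c, c')` labeled by the items in `B` form a single directed
cycle through `m + 1` distinct cluster indices. -/
def IsCycleOn (c c' : X → Fin k) (B : Finset X) : Prop :=
  ∃ (m : ℕ) (v : Fin (m + 1) ↪ Fin k) (g : Fin (m + 1) → X),
    Function.Injective g ∧ Finset.univ.image g = B ∧
    ∀ i, c (g i) = v i ∧ c' (g i) = v (i + 1)

/-- The edges of `CDG(c, c')` labeled by the items in `B` form a single directed
path through `m + 2` distinct cluster indices. -/
def IsPathOn (c c' : X → Fin k) (B : Finset X) : Prop :=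
  ∃ (m : ℕ) (v : Fin (m + 2) ↪ Fin k) (g : Fin (m + 1) → X),
    Function.Injective g ∧ Finset.univ.image g = B ∧
    ∀ i : Fin (m + 1), c (g i) = v i.castSucc ∧ c' (g i) = v i.succ
section Aux
variable (x₀ : X) (v₀ : Fin k)

def stepc (vs : List (Fin k)) (xs : List X) (c : X → Fin k) : X → Fin k :=
  fun x => vs.getD (xs.idxOf x + 1) (c x)

set_option linter.unusedSectionVars false in
lemma stepc_not_mem {vs : List (Fin k)} {xs : List X} {c : X → Fin k} {x : X}
    (hlen : vs.length = xs.length + 1) (hx : x ∉ xs) : stepc vs xs c x = c x := by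
  unfold stepc
  rw [List.idxOf_eq_length_iff.mpr hx]
  exact List.getD_eq_default _ _ (by omega)

set_option linter.unusedSectionVars false in
lemma nodup_of_src {c : X → Fin k} {vs : List (Fin k)} {xs : List X}
    (hnd : vs.Nodup) (hlen : vs.length = xs.length + 1)
    (hsrc : ∀ i < xs.length, c (xs.getD i x₀) = vs.getD i v₀) : xs.Nodup := by
  rw [List.nodup_iff_injective_get]
  intro i j hij
  have h1 := hsrc i.1 i.2
  have h2 := hsrc j.1 j.2
  rw [List.getD_eq_getElem _ _ i.2] at h1
  rw [List.getD_eq_getElem _ _ j.2] at h2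
  simp only [List.get_eq_getElem] at hij
  rw [hij, h2] at h1
  rw [List.getD_eq_getElem _ _ (by have := j.2; omega : (j : ℕ) < vs.length),
    List.getD_eq_getElem _ _ (by have := i.2; omega : (i : ℕ) < vs.length),
    hnd.getElem_inj_iff] at h1
  exact Fin.ext h1.symm

set_option linter.unusedSectionVars false in
lemma stepc_getD {vs : List (Fin k)} {xs : List X} {c : X → Fin k}
    (hnd : xs.Nodup) (hlen : vs.length = xs.length + 1) {i : ℕ} (hi : i < xs.length) :
    stepc vs xs c (xs.getD i x₀) = vs.getD (i + 1) v₀ := by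
  have h1 : xs.getD i x₀ = xs[i] := List.getD_eq_getElem _ _ hi
  have h2 : xs.idxOf xs[i] = i := by
    have hlt : xs.idxOf xs[i] < xs.length := List.idxOf_lt_length_iff.mpr (List.getElem_mem hi)
    have h3 := List.getElem_idxOf hlt
    exact hnd.getElem_inj_iff.mp h3
  unfold stepc
  rw [h1, h2, List.getD_eq_getElem _ _ (by omega), List.getD_eq_getElem _ _ (by omega)]

lemma move_of_lists {c d : X → Fin k} {vs : List (Fin k)} {xs : List X}
    (hnd : vs.Nodup) (hlen : vs.length = xs.length + 1) (hne : xs ≠ [])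
    (hsrc : ∀ i < xs.length, c (xs.getD i x₀) = vs.getD i v₀)
    (htgt : ∀ i < xs.length, d (xs.getD i x₀) = vs.getD (i + 1) v₀)
    (hoff : ∀ x, x ∉ xs → d x = c x) :
    IsSequentialMove c d := by
  have hxnd : xs.Nodup := nodup_of_src x₀ v₀ hnd hlen hsrc
  obtain ⟨m, hm⟩ : ∃ m, xs.length = m + 1 :=
    ⟨xs.length - 1, by have := List.length_pos_iff.mpr hne; omega⟩
  refine ⟨m, ⟨fun i => vs.getD i v₀, ?_⟩, ?_⟩
  · intro i j hij
    simp only at hij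
    rw [List.getD_eq_getElem _ _ (by have := i.2; omega : (i : ℕ) < vs.length),
      List.getD_eq_getElem _ _ (by have := j.2; omega : (j : ℕ) < vs.length),
      hnd.getElem_inj_iff] at hij
    exact Fin.ext hij
  · have hFne : ∀ i : Fin (m+1), c (xs.getD i.1 x₀) ≠ d (xs.getD i.1 x₀) := by
      intro i
      rw [hsrc i.1 (by have := i.2; omega), htgt i.1 (by have := i.2; omega)]
      intro h
      rw [List.getD_eq_getElem _ _ (by omega : i.1 < vs.length),
        List.getD_eq_getElem _ _ (by have := i.2; omega : i.1 + 1 < vs.length),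
        hnd.getElem_inj_iff] at h
      omega
    let F : Fin (m+1) → {x : X // c x ≠ d x} := fun i => ⟨xs.getD i.1 x₀, hFne i⟩
    have hbij : Function.Bijective F := by
      constructor
      · intro i j hij
        have h5 : xs.getD i.1 x₀ = xs.getD j.1 x₀ := congrArg Subtype.val hij
        rw [List.getD_eq_getElem _ _ (by have := i.2; omega : i.1 < xs.length),
          List.getD_eq_getElem _ _ (by have := j.2; omega : j.1 < xs.length),
          hxnd.getElem_inj_iff] at h5
        exact Fin.ext h5
      · rintro ⟨x, hx⟩
        have hxm : x ∈ xs := by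
          by_contra hxm
          exact hx ((hoff x hxm).symm)
        obtain ⟨n, hn, hget⟩ := List.mem_iff_getElem.mp hxm
        refine ⟨⟨n, by omega⟩, ?_⟩
        apply Subtype.ext
        show xs.getD n x₀ = x
        rw [List.getD_eq_getElem _ _ hn]
        exact hget
    refine ⟨(Equiv.ofBijective F hbij).symm, ?_⟩
    intro x
    have hx : F ((Equiv.ofBijective F hbij).symm x) = x := by
      exact (Equiv.ofBijective F hbij).apply_symm_apply x
    let i := (Equiv.ofBijective F hbij).symm x
    have hxval : x.1 = xs.getD i.1 x₀ := by rw [← hx]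
    constructor
    · show c x.1 = vs.getD ((i.castSucc : Fin (m+2)) : ℕ) v₀
      rw [hxval, hsrc i.1 (by have := i.2; omega)]
      rfl
    · show d x.1 = vs.getD ((i.succ : Fin (m+2)) : ℕ) v₀
      rw [hxval, htgt i.1 (by have := i.2; omega)]
      rfl

end Aux

section Key
variable (x₀ : X) (v₀ : Fin k)

set_option linter.unusedSectionVars false

lemma getD_left {α : Type*} {l l' : List α} {d : α} {n : ℕ} (h : n < l.length) :
    (l ++ l').getD n d = l.getD n d := List.getD_append _ _ _ _ h

lemma getD_right {α : Type*} {l l' : List α} {d : α} {n m : ℕ} (h : l.length ≤ n)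
    (hm : m = n - l.length) : (l ++ l').getD n d = l'.getD m d := by
  rw [List.getD_append_right _ _ _ _ h, hm]

lemma src_append {c : X → Fin k} {vsa vsb : List (Fin k)} {xsa xsb : List X}
    (hla : vsa.length = xsa.length)
    (ha : ∀ i < xsa.length, c (xsa.getD i x₀) = vsa.getD i v₀)
    (hb : ∀ i < xsb.length, c (xsb.getD i x₀) = vsb.getD i v₀) :
    ∀ i < (xsa ++ xsb).length, c ((xsa ++ xsb).getD i x₀) = (vsa ++ vsb).getD i v₀ := by
  intro i hi
  rw [List.length_append] at hi
  rcases lt_or_ge i xsa.length with h | h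
  · rw [getD_left h, getD_left (by omega)]
    exact ha i h
  · rw [getD_right h rfl, getD_right (l := vsa) (by omega) (by omega : i - xsa.length = i - vsa.length)]
    exact hb _ (by omega)

def keyVS (pv : List (Fin k)) (cs : List (List (Fin k) × List X)) (vs1 : List (Fin k)) :
    List (Fin k) := pv ++ ((cs.map Prod.fst).flatten ++ vs1)

def keyXS (px : List X) (cs : List (List (Fin k) × List X)) (xs1 : List X) : List X :=
  px ++ ((cs.map Prod.snd).flatten ++ xs1)

def resVS (v₀ : Fin k) (cs : List (List (Fin k) × List X)) (vs1 : List (Fin k)) :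
    List (Fin k) := vs1.getD 0 v₀ :: cs.reverse.map (fun p => p.1.getD 0 v₀)

def resXS (x₀ : X) (cs : List (List (Fin k) × List X)) : List X :=
  cs.reverse.map (fun p => p.2.getD (p.2.length - 1) x₀)

structure KeyConc (c : X → Fin k) (x₀ : X) (v₀ : Fin k) (pv : List (Fin k)) (px : List X)
    (cs : List (List (Fin k) × List X)) (vs1 : List (Fin k)) (xs1 : List X) : Prop where
  nodup : (keyVS pv cs vs1).Nodup
  len : (keyVS pv cs vs1).length = (keyXS px cs xs1).length + 1
  src : ∀ i < (keyXS px cs xs1).length,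
    c ((keyXS px cs xs1).getD i x₀) = (keyVS pv cs vs1).getD i v₀
  res : ∀ i < cs.length,
    stepc (keyVS pv cs vs1) (keyXS px cs xs1) c ((resXS x₀ cs).getD i x₀)
      = (resVS v₀ cs vs1).getD i v₀
  resend : (resVS v₀ cs vs1).getD cs.length v₀ = (keyVS pv cs vs1).getD px.length v₀
  mid : ∀ p ∈ cs, ∀ i, i + 1 < p.2.length →
    stepc (keyVS pv cs vs1) (keyXS px cs xs1) c (p.2.getD i x₀) = p.1.getD (i+1) v₀
  tail : ∀ i, i + 1 < vs1.length →
    stepc (keyVS pv cs vs1) (keyXS px cs xs1) c (xs1.getD i x₀) = vs1.getD (i+1) v₀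
  pre : ∀ i < px.length,
    stepc (keyVS pv cs vs1) (keyXS px cs xs1) c (px.getD i x₀)
      = (keyVS pv cs vs1).getD (i+1) v₀

lemma key (c : X → Fin k) (cs : List (List (Fin k) × List X)) {vs1 : List (Fin k)}
    {xs1 : List X} (hvs1 : vs1.Nodup) (hlen1 : vs1.length = xs1.length + 1)
    (hsrc1 : ∀ i < xs1.length, c (xs1.getD i x₀) = vs1.getD i v₀) :
    ∀ pv px, pv.length = px.length → pv.Nodup →
    (∀ i < px.length, c (px.getD i x₀) = pv.getD i v₀) →
    (∀ p ∈ cs, p.1.Nodup ∧ p.1.length = p.2.length ∧ p.2 ≠ [] ∧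
      ∀ i < p.2.length, c (p.2.getD i x₀) = p.1.getD i v₀) →
    (pv :: vs1 :: cs.map Prod.fst).Pairwise List.Disjoint →
    KeyConc c x₀ v₀ pv px cs vs1 xs1 := by
  induction cs with
  | nil =>
    intro pv px hpl hpnd hpsrc _ hdisj
    have hxs1 : xs1.length + 1 = vs1.length := hlen1.symm
    have hVS : keyVS pv ([] : List (List (Fin k) × List X)) vs1 = pv ++ vs1 := by
      simp [keyVS]
    have hXS : keyXS px ([] : List (List (Fin k) × List X)) xs1 = px ++ xs1 := by
      simp [keyXS]
    have hdj : pv.Disjoint vs1 := by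
      rcases List.pairwise_cons.mp hdisj with ⟨h1, _⟩
      exact h1 vs1 (by simp)
    have hnodup : (pv ++ vs1).Nodup := List.nodup_append'.mpr ⟨hpnd, hvs1, hdj⟩
    have hlen : (pv ++ vs1).length = (px ++ xs1).length + 1 := by
      simp [hpl, hlen1]; omega
    have hsrc : ∀ i < (px ++ xs1).length,
        c ((px ++ xs1).getD i x₀) = (pv ++ vs1).getD i v₀ :=
      src_append x₀ v₀ hpl hpsrc hsrc1
    have hxsnd : (px ++ xs1).Nodup := nodup_of_src x₀ v₀ hnodup hlen hsrc
    constructor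
    · rw [hVS]; exact hnodup
    · rw [hVS, hXS]; exact hlen
    · rw [hVS, hXS]; exact hsrc
    · intro i hi; simp at hi
    · show (resVS v₀ [] vs1).getD 0 v₀ = _
      rw [hVS]
      show vs1.getD 0 v₀ = _
      rw [getD_right (l := pv) (by omega) (by omega : (0:ℕ) = px.length - pv.length)]
    · intro p hp; simp at hp
    · intro i hi
      rw [hVS, hXS]
      have h1 : (px ++ xs1).getD (px.length + i) x₀ = xs1.getD i x₀ :=
        getD_right (by omega) (by omega)
      have h2 := stepc_getD x₀ v₀ (c := c) hxsnd hlen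
        (i := px.length + i) (by simp; omega)
      rw [h1] at h2
      rw [h2, getD_right (l := pv) (by omega) (by omega : i + 1 = px.length + i + 1 - pv.length)]
    · intro i hi
      rw [hVS, hXS]
      have h1 : (px ++ xs1).getD i x₀ = px.getD i x₀ := getD_left hi
      have h2 := stepc_getD x₀ v₀ (c := c) hxsnd hlen (i := i) (by simp; omega)
      rw [h1] at h2
      exact h2
  | cons p cs' ih =>
    intro pv px hpl hpnd hpsrc hcs hdisj
    obtain ⟨hp1nd, hp12, hp2ne, hpsrcp⟩ := hcs p (by simp)
    have hp2len : 1 ≤ p.2.length := List.length_pos_iff.mpr hp2ne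
    -- disjointness facts
    have hdisj1 := List.pairwise_cons.mp hdisj
    have hdisj2 := List.pairwise_cons.mp hdisj1.2
    have hdjpv_vs1 : pv.Disjoint vs1 := hdisj1.1 vs1 (by simp)
    have hdjpv_p1 : pv.Disjoint p.1 := hdisj1.1 p.1 (by simp)
    have hdjvs1_p1 : vs1.Disjoint p.1 := hdisj2.1 p.1 (by simp)
    have hdisj' : ((pv ++ p.1) :: vs1 :: cs'.map Prod.fst).Pairwise List.Disjoint := by
      rw [List.pairwise_cons]
      constructor
      · intro l hl
        rw [List.disjoint_append_left]
        rcases List.mem_cons.mp hl with rfl | hl'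
        · exact ⟨hdjpv_vs1, List.Disjoint.symm hdjvs1_p1⟩
        · refine ⟨hdisj1.1 l (by simp [hl']), ?_⟩
          exact (List.pairwise_cons.mp hdisj2.2).1 l hl'
      · refine List.pairwise_cons.mpr ⟨fun l hl => hdisj2.1 l (by simp [hl]), ?_⟩
        exact (List.pairwise_cons.mp hdisj2.2).2
    have hpl' : (pv ++ p.1).length = (px ++ p.2).length := by simp [hpl, hp12]
    have hpnd' : (pv ++ p.1).Nodup := List.nodup_append'.mpr ⟨hpnd, hp1nd, hdjpv_p1⟩
    have hpsrc' := src_append x₀ v₀ hpl hpsrc hpsrcp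
    have KH := ih (pv ++ p.1) (px ++ p.2) hpl' hpnd' hpsrc'
      (fun q hq => hcs q (by simp [hq])) hdisj'
    have EV : keyVS pv (p :: cs') vs1 = keyVS (pv ++ p.1) cs' vs1 := by
      simp [keyVS, List.append_assoc]
    have EX : keyXS px (p :: cs') xs1 = keyXS (px ++ p.2) cs' xs1 := by
      simp [keyXS, List.append_assoc]
    have ER1 : resXS x₀ (p :: cs') = resXS x₀ cs' ++ [p.2.getD (p.2.length - 1) x₀] := by
      simp [resXS]
    have ER2 : resVS v₀ (p :: cs') vs1 = resVS v₀ cs' vs1 ++ [p.1.getD 0 v₀] := by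
      simp [resVS]
    have hlr1 : (resXS x₀ cs').length = cs'.length := by simp [resXS]
    have hlr2 : (resVS v₀ cs' vs1).length = cs'.length + 1 := by simp [resVS]
    constructor
    · rw [EV]; exact KH.nodup
    · rw [EV, EX]; exact KH.len
    · intro i hi
      rw [EX] at hi
      rw [EV, EX]
      exact KH.src i hi
    · -- res
      intro i hi
      simp only [List.length_cons] at hi
      rw [EV, EX, ER1, ER2]
      rcases lt_or_ge i cs'.length with h | h
      · rw [getD_left (by omega : i < (resXS x₀ cs').length),
          getD_left (by omega : i < (resVS v₀ cs' vs1).length)]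
        exact KH.res i h
      · have hieq : i = cs'.length := by omega
        subst hieq
        rw [getD_right (by omega) (by omega : (0:ℕ) = cs'.length - (resXS x₀ cs').length),
          getD_left (by omega : cs'.length < (resVS v₀ cs' vs1).length)]
        show stepc _ _ c (p.2.getD (p.2.length - 1) x₀) = _
        have h2 := KH.pre (px.length + p.2.length - 1) (by simp; omega)
        have h1 : (px ++ p.2).getD (px.length + p.2.length - 1) x₀
            = p.2.getD (p.2.length - 1) x₀ :=
          getD_right (by omega) (by omega)
        rw [h1] at h2
        rw [h2]
        have h3 : px.length + p.2.length - 1 + 1 = (px ++ p.2).length := by simp; omega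
        rw [h3]
        exact KH.resend.symm
    · -- resend
      show (resVS v₀ (p :: cs') vs1).getD (cs'.length + 1) v₀ = _
      rw [ER2, getD_right (by omega) (by omega : (0:ℕ) = cs'.length + 1 - (resVS v₀ cs' vs1).length)]
      show p.1.getD 0 v₀ = _
      simp only [keyVS, List.map_cons, List.flatten_cons]
      rw [getD_right (l := pv) (by omega) (by omega : (0:ℕ) = px.length - pv.length),
        List.append_assoc, getD_left (by omega : 0 < p.1.length)]
    · -- mid
      intro q hq i hi
      rcases List.mem_cons.mp hq with rfl | hq'
      · rw [EV, EX]
        have h1 : (px ++ q.2).getD (px.length + i) x₀ = q.2.getD i x₀ :=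
          getD_right (by omega) (by omega)
        have h2 := KH.pre (px.length + i) (by simp; omega)
        rw [h1] at h2
        rw [h2]
        simp only [keyVS]
        rw [getD_left (by simp; omega : px.length + i + 1 < (pv ++ q.1).length),
          getD_right (l := pv) (by omega) (by omega : i + 1 = px.length + i + 1 - pv.length)]
      · rw [EV, EX]
        exact KH.mid q hq' i hi
    · -- tail
      intro i hi
      rw [EV, EX]
      exact KH.tail i hi
    · -- pre
      intro i hi
      rw [EV, EX]
      have h1 : (px ++ p.2).getD i x₀ = px.getD i x₀ := getD_left (by omega)
      have h2 := KH.pre i (by simp; omega)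
      rw [h1] at h2
      exact h2


end Key

section Data
set_option linter.unusedSectionVars false
variable (x₀ : X) (v₀ : Fin k) (c c' : X → Fin k)


def CycD (B : Finset X) (p : List (Fin k) × List X) : Prop :=
  p.1.Nodup ∧ p.1.length = p.2.length ∧ p.2 ≠ [] ∧ p.2.toFinset = B ∧
  (∀ i < p.2.length, c (p.2.getD i x₀) = p.1.getD i v₀) ∧
  (∀ i < p.2.length, c' (p.2.getD i x₀) = p.1.getD ((i+1) % p.1.length) v₀)

def PathD (B : Finset X) (vs : List (Fin k)) (xs : List X) : Prop :=
  vs.Nodup ∧ vs.length = xs.length + 1 ∧ xs ≠ [] ∧ xs.toFinset = B ∧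
  (∀ i < xs.length, c (xs.getD i x₀) = vs.getD i v₀) ∧
  (∀ i < xs.length, c' (xs.getD i x₀) = vs.getD (i+1) v₀)

lemma cycD_exists {B : Finset X} (hB : IsCycleOn c c' B) :
    ∃ p : List (Fin k) × List X, CycD x₀ v₀ c c' B p := by
  obtain ⟨m, v, g, hg, hgB, hvg⟩ := hB
  refine ⟨(List.ofFn (fun i => v i), List.ofFn g), List.nodup_ofFn.mpr (fun a b h => v.injective h),
    by simp, by simp [← List.length_pos_iff_ne_nil], ?_, ?_, ?_⟩
  · ext x
    simp only [List.mem_toFinset, List.mem_ofFn, Set.mem_range, ← hgB, Finset.mem_image,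
      Finset.mem_univ, true_and]
  · intro i hi
    simp only [List.length_ofFn] at hi
    rw [List.getD_eq_getElem _ _ (by simpa using hi), List.getD_eq_getElem _ _ (by simpa using hi),
      List.getElem_ofFn, List.getElem_ofFn]
    exact (hvg _).1
  · intro i hi
    simp only [List.length_ofFn] at hi
    have hmod : (i + 1) % (m + 1) < m + 1 := Nat.mod_lt _ (by omega)
    rw [List.getD_eq_getElem _ _ (by simpa using hi),
      List.getD_eq_getElem _ _ (by simpa [List.length_ofFn] using hmod),
      List.getElem_ofFn, List.getElem_ofFn]
    have := (hvg ⟨i, hi⟩).2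
    rw [this]
    congr 1
    apply Fin.ext
    simp only [Fin.add_def]
    simp [Fin.val_one', Nat.add_mod, Nat.mod_mod_of_dvd]

lemma pathD_exists {B : Finset X} (hB : IsPathOn c c' B) :
    ∃ vs xs, PathD x₀ v₀ c c' B vs xs := by
  obtain ⟨m, v, g, hg, hgB, hvg⟩ := hB
  refine ⟨List.ofFn (fun i => v i), List.ofFn g,
    List.nodup_ofFn.mpr (fun a b h => v.injective h),
    by simp, by simp [← List.length_pos_iff_ne_nil], ?_, ?_, ?_⟩
  · ext x
    simp only [List.mem_toFinset, List.mem_ofFn, Set.mem_range, ← hgB, Finset.mem_image,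
      Finset.mem_univ, true_and]
  · intro i hi
    simp only [List.length_ofFn] at hi
    rw [List.getD_eq_getElem _ _ (by simpa using hi),
      List.getD_eq_getElem _ _ (by simp [List.length_ofFn]; omega),
      List.getElem_ofFn, List.getElem_ofFn]
    exact (hvg _).1
  · intro i hi
    simp only [List.length_ofFn] at hi
    rw [List.getD_eq_getElem _ _ (by simpa using hi),
      List.getD_eq_getElem _ _ (by simp [List.length_ofFn]; omega),
      List.getElem_ofFn, List.getElem_ofFn]
    have := (hvg ⟨i, hi⟩).2
    rw [this]
    congr 1

lemma getD_mem {α : Type*} {l : List α} {i : ℕ} (hi : i < l.length) (d : α) :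
    l.getD i d ∈ l := by
  rw [List.getD_eq_getElem _ _ hi]; exact List.getElem_mem hi

lemma mem_getD {α : Type*} {l : List α} {x : α} (hx : x ∈ l) (d : α) :
    ∃ i < l.length, l.getD i d = x := by
  obtain ⟨n, hn, h⟩ := List.mem_iff_getElem.mp hx
  exact ⟨n, hn, by rw [List.getD_eq_getElem _ _ hn]; exact h⟩

lemma cycD_vsub {B : Finset X} {p : List (Fin k) × List X} (h : CycD x₀ v₀ c c' B p) :
    ∀ a ∈ p.1, a ∈ B.image c ∪ B.image c' := by
  obtain ⟨hnd, hlen, hne, hBs, hsrc, _⟩ := h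
  intro a ha
  obtain ⟨i, hi, hia⟩ := mem_getD ha v₀
  have : c (p.2.getD i x₀) = a := by rw [hsrc i (by omega), hia]
  refine Finset.mem_union_left _ (Finset.mem_image.mpr ⟨p.2.getD i x₀, ?_, this⟩)
  rw [← hBs]
  exact List.mem_toFinset.mpr (getD_mem (by omega) _)

lemma pathD_vsub {B : Finset X} {vs : List (Fin k)} {xs : List X}
    (h : PathD x₀ v₀ c c' B vs xs) :
    ∀ a ∈ vs, a ∈ B.image c ∪ B.image c' := by
  obtain ⟨hnd, hlen, hne, hBs, hsrc, htgt⟩ := h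
  intro a ha
  obtain ⟨i, hi, hia⟩ := mem_getD ha v₀
  rcases lt_or_ge i xs.length with hlt | hge
  · have : c (xs.getD i x₀) = a := by rw [hsrc i hlt, hia]
    refine Finset.mem_union_left _ (Finset.mem_image.mpr ⟨xs.getD i x₀, ?_, this⟩)
    rw [← hBs]; exact List.mem_toFinset.mpr (getD_mem hlt _)
  · have hieq : i = xs.length := by omega
    have hxl : 1 ≤ xs.length := List.length_pos_iff.mpr hne
    have : c' (xs.getD (xs.length - 1) x₀) = a := by
      rw [htgt _ (by omega)]
      rw [(by omega : xs.length - 1 + 1 = i), hia]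
    refine Finset.mem_union_right _ (Finset.mem_image.mpr ⟨xs.getD (xs.length - 1) x₀, ?_, this⟩)
    rw [← hBs]; exact List.mem_toFinset.mpr (getD_mem (by omega) _)

lemma cycD_xmem {B : Finset X} {p : List (Fin k) × List X} (h : CycD x₀ v₀ c c' B p) :
    ∀ x ∈ p.2, x ∈ B := fun x hx => h.2.2.2.1 ▸ List.mem_toFinset.mpr hx

lemma pathD_xmem {B : Finset X} {vs : List (Fin k)} {xs : List X}
    (h : PathD x₀ v₀ c c' B vs xs) : ∀ x ∈ xs, x ∈ B :=
  fun x hx => h.2.2.2.1 ▸ List.mem_toFinset.mpr hx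

lemma cyc_ne_path {B B' : Finset X} (hB : IsCycleOn c c' B) (hB' : IsPathOn c c' B') :
    B ≠ B' := by
  obtain ⟨m, v, g, hg, hgB, hvg⟩ := hB
  obtain ⟨m', v', g', hg', hgB', hvg'⟩ := hB'
  intro hBB
  -- in a cycle, image c' ⊆ image c; in a path, the last c'-vertex is not a c-vertex
  have hsub : B'.image c' ⊆ B'.image c := by
    intro a ha
    obtain ⟨x, hx, hxa⟩ := Finset.mem_image.mp ha
    rw [← hBB] at hx
    obtain ⟨i, _, hgi⟩ := Finset.mem_image.mp (hgB ▸ hx)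
    have : a = v (i + 1) := by rw [← hxa, ← hgi, (hvg i).2]
    refine Finset.mem_image.mpr ⟨g (i+1), ?_, ?_⟩
    · rw [← hBB, ← hgB]; exact Finset.mem_image_of_mem _ (Finset.mem_univ _)
    · rw [(hvg (i+1)).1, this]
  have hlast : v' (Fin.last (m' + 1)) ∈ B'.image c' := by
    refine Finset.mem_image.mpr ⟨g' (Fin.last m'), ?_, ?_⟩
    · rw [← hgB']; exact Finset.mem_image_of_mem _ (Finset.mem_univ _)
    · rw [(hvg' (Fin.last m')).2]; rfl
  have := hsub hlast
  obtain ⟨x, hx, hxa⟩ := Finset.mem_image.mp this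
  obtain ⟨j, _, hgj⟩ := Finset.mem_image.mp (hgB' ▸ hx)
  rw [← hgj, (hvg' j).1] at hxa
  have := v'.injective hxa
  have : (j.castSucc : ℕ) = m' + 1 := by rw [this]; rfl
  have hj := j.2
  simp [Fin.coe_castSucc] at this
  omega

lemma move_of_step {c : X → Fin k} {vs : List (Fin k)} {xs : List X}
    (hnd : vs.Nodup) (hlen : vs.length = xs.length + 1) (hne : xs ≠ [])
    (hsrc : ∀ i < xs.length, c (xs.getD i x₀) = vs.getD i v₀) :
    IsSequentialMove c (stepc vs xs c) :=
  move_of_lists x₀ v₀ hnd hlen hne hsrc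
    (fun i hi => stepc_getD x₀ v₀ (nodup_of_src x₀ v₀ hnd hlen hsrc) hlen hi)
    (fun x hx => stepc_not_mem hlen hx)

lemma getD_pos_unique {α : Type*} {l : List α} (hnd : l.Nodup) {i j : ℕ} (d : α)
    (hi : i < l.length) (hj : j < l.length) (h : l.getD i d = l.getD j d) : i = j := by
  rw [List.getD_eq_getElem _ _ hi, List.getD_eq_getElem _ _ hj] at h
  exact hnd.getElem_inj_iff.mp h

end Data

lemma getD_drop_one {α : Type*} {l : List α} {d : α} {j : ℕ} (hj : j + 1 < l.length) :
    (l.drop 1).getD j d = l.getD (j + 1) d := by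
  rw [List.getD_eq_getElem _ _ (by rw [List.length_drop]; omega),
    List.getD_eq_getElem _ _ hj, List.getElem_drop]
  congr 1
  omega

lemma transDist_le {c c' : X → Fin k} (n : ℕ) (f : ℕ → X → Fin k)
    (h0 : f 0 = c) (hn : f n = c') (hm : ∀ i < n, IsMove (f i) (f (i + 1))) :
    transDist c c' ≤ n := Nat.sInf_le ⟨f, h0, hn, hm⟩

set_option maxHeartbeats 1000000 in
/-- If `CDG(c, c')` decomposes into pairwise vertex-disjoint directed cycles and
`t ≥ 1` directed paths (all cycles and paths mutually vertex-disjoint), then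
`d(c, c') ≤ max {2, t}`. -/
theorem stmt_11 (c c' : X → Fin k) (CS PS : Finset (Finset X)) (t : ℕ)
    (ht : 1 ≤ t) (htcard : PS.card = t)
    (hcyc : ∀ B ∈ CS, IsCycleOn c c' B)
    (hpath : ∀ B ∈ PS, IsPathOn c c' B)
    (hcover : (CS ∪ PS).biUnion id = Finset.univ.filter fun x => c x ≠ c' x)
    (hdisj : ∀ B ∈ CS ∪ PS, ∀ B' ∈ CS ∪ PS, B ≠ B' →
      Disjoint (B.image c ∪ B.image c') (B'.image c ∪ B'.image c')) :
    transDist c c' ≤ max 2 t := by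
  classical
  have hPSne : PS.Nonempty := Finset.card_pos.mp (by omega)
  obtain ⟨P0, hP0mem⟩ := hPSne
  obtain ⟨m0, v0, g0, -, -, -⟩ := hpath P0 hP0mem
  set x₀ := g0 0 with hx₀def
  set v₀ := c (g0 0) with hv₀def
  have hpd : ∀ B ∈ PS, ∃ vs xs, PathD x₀ v₀ c c' B vs xs :=
    fun B hB => pathD_exists x₀ v₀ c c' (hpath B hB)
  choose! pv px hpp using hpd
  have hcd : ∀ B ∈ CS, ∃ p : List (Fin k) × List X, CycD x₀ v₀ c c' B p :=
    fun B hB => cycD_exists x₀ v₀ c c' (hcyc B hB)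
  choose! cf hcf using hcd
  set cs : List (List (Fin k) × List X) := CS.toList.map cf with hcs_def
  have hcs_mem : ∀ q ∈ cs, ∃ B ∈ CS, cf B = q := by
    intro q hq
    rw [hcs_def] at hq
    obtain ⟨B, hB, h⟩ := List.mem_map.mp hq
    exact ⟨B, Finset.mem_toList.mp hB, h⟩
  have hcs_mem' : ∀ B ∈ CS, cf B ∈ cs := by
    intro B hB
    rw [hcs_def]
    exact List.mem_map.mpr ⟨B, Finset.mem_toList.mpr hB, rfl⟩
  have hcs_ok : ∀ q ∈ cs, q.1.Nodup ∧ q.1.length = q.2.length ∧ q.2 ≠ [] ∧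
      ∀ i < q.2.length, c (q.2.getD i x₀) = q.1.getD i v₀ := by
    intro q hq
    obtain ⟨B, hB, rfl⟩ := hcs_mem q hq
    obtain ⟨h1, h2, h3, h4, h5, h6⟩ := hcf B hB
    exact ⟨h1, h2, h3, h5⟩
  have hcs_tgt : ∀ q ∈ cs, ∀ i < q.2.length,
      c' (q.2.getD i x₀) = q.1.getD ((i+1) % q.1.length) v₀ := by
    intro q hq
    obtain ⟨B, hB, rfl⟩ := hcs_mem q hq
    exact (hcf B hB).2.2.2.2.2
  have hitem : ∀ B ∈ CS ∪ PS, ∀ B' ∈ CS ∪ PS, B ≠ B' → ∀ x, x ∈ B → x ∈ B' → False := by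
    intro B hB B' hB' hne x hxB hxB'
    have h := hdisj B hB B' hB' hne
    rw [Finset.disjoint_left] at h
    exact h (Finset.mem_union_left _ (Finset.mem_image_of_mem c hxB))
      (Finset.mem_union_left _ (Finset.mem_image_of_mem c hxB'))
  have hvdisj : ∀ B ∈ CS ∪ PS, ∀ B' ∈ CS ∪ PS, B ≠ B' → ∀ l l' : List (Fin k),
      (∀ a ∈ l, a ∈ B.image c ∪ B.image c') → (∀ a ∈ l', a ∈ B'.image c ∪ B'.image c') →
      l.Disjoint l' := by
    intro B hB B' hB' hne l l' hl hl' a ha ha'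
    have h := hdisj B hB B' hB' hne
    rw [Finset.disjoint_left] at h
    exact h (hl a ha) (hl' a ha')
  have hCSPS : ∀ B ∈ CS, ∀ P ∈ PS, B ≠ P :=
    fun B hB P hP => cyc_ne_path c c' (hcyc B hB) (hpath P hP)
  have hCSdj : ∀ B ∈ CS, ∀ B' ∈ CS, B ≠ B' → (cf B).1.Disjoint (cf B').1 := by
    intro B hB B' hB' hne
    exact hvdisj B (Finset.mem_union_left _ hB) B' (Finset.mem_union_left _ hB') hne _ _
      (cycD_vsub x₀ v₀ c c' (hcf B hB)) (cycD_vsub x₀ v₀ c c' (hcf B' hB'))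
  have hblocks_pw : (cs.map Prod.fst).Pairwise List.Disjoint := by
    rw [hcs_def, List.map_map, List.pairwise_map]
    refine List.Pairwise.imp_of_mem ?_ CS.nodup_toList
    intro B B' hBm hB'm hne
    exact hCSdj B (Finset.mem_toList.mp hBm) B' (Finset.mem_toList.mp hB'm) hne
  have hcov : ∀ x : X, c x ≠ c' x → ∃ B ∈ CS ∪ PS, x ∈ B := by
    intro x hx
    have hx2 : x ∈ (CS ∪ PS).biUnion id := by
      rw [hcover]
      exact Finset.mem_filter.mpr ⟨Finset.mem_univ x, hx⟩
    simpa using Finset.mem_biUnion.mp hx2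
  have hps_len : PS.toList.length = t := by rw [Finset.length_toList, htcard]
  have hps_nd : PS.toList.Nodup := PS.nodup_toList
  obtain ⟨P1, ps1, hps1⟩ := List.exists_cons_of_ne_nil
    (show PS.toList ≠ [] by intro h; rw [h] at hps_len; simp at hps_len; omega)
  have hP1 : P1 ∈ PS := Finset.mem_toList.mp (hps1 ▸ List.mem_cons_self)
  obtain ⟨h1nd, h1len, h1ne, h1B, h1src, h1tgt⟩ := hpp P1 hP1
  have h1pos : 0 < (px P1).length := List.length_pos_iff.mpr h1ne
  have hcs_inj : ∀ q ∈ cs, ∀ q' ∈ cs, q ≠ q' → q.1.Disjoint q'.1 := by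
    intro q hq q' hq' hne
    obtain ⟨B, hB, rfl⟩ := hcs_mem q hq
    obtain ⟨B', hB', rfl⟩ := hcs_mem q' hq'
    exact hCSdj B hB B' hB' (fun h => hne (by rw [h]))
  have hhead_mem : ∀ q ∈ cs, q.1.getD 0 v₀ ∈ q.1 := by
    intro q hq
    obtain ⟨-, h2, h3, -⟩ := hcs_ok q hq
    exact getD_mem (by have := List.length_pos_iff.mpr h3; omega) _
  have hq2pos : ∀ q ∈ cs, 0 < q.2.length := by
    intro q hq
    obtain ⟨-, -, h3, -⟩ := hcs_ok q hq
    exact List.length_pos_iff.mpr h3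
  have hq2nd : ∀ q ∈ cs, q.2.Nodup := by
    intro q hq
    obtain ⟨hnd', hl', -, hsrc'⟩ := hcs_ok q hq
    rw [List.nodup_iff_injective_get]
    intro i j hij
    have hi1 := hsrc' i.1 (by have := i.2; omega)
    have hi2 := hsrc' j.1 (by have := j.2; omega)
    rw [List.getD_eq_getElem _ _ (by have := i.2; omega)] at hi1
    rw [List.getD_eq_getElem _ _ (by have := j.2; omega)] at hi2
    simp only [List.get_eq_getElem] at hij
    rw [hij, hi2] at hi1
    have hu := getD_pos_unique hnd' (d := v₀) (i := (j : ℕ)) (j := (i : ℕ))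
      (by have := j.2; omega) (by have := i.2; omega) hi1
    exact Fin.ext hu.symm
  have hRVSnd : (resVS v₀ cs (pv P1)).Nodup := by
    have hmap : (cs.reverse.map (fun q => q.1.getD 0 v₀)).Nodup := by
      refine List.Nodup.map_on ?_ ?_
      · intro q hq q' hq' heq
        by_contra hne
        exact hcs_inj q (List.mem_reverse.mp hq) q' (List.mem_reverse.mp hq') hne
          (hhead_mem q (List.mem_reverse.mp hq)) (heq ▸ hhead_mem q' (List.mem_reverse.mp hq'))
      · rw [List.nodup_reverse, hcs_def]
        refine List.Nodup.map_on ?_ CS.nodup_toList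
        intro B hB B' hB' heq
        have hb1 := (hcf B (Finset.mem_toList.mp hB)).2.2.2.1
        have hb2 := (hcf B' (Finset.mem_toList.mp hB')).2.2.2.1
        rw [← hb1, ← hb2, heq]
    refine List.nodup_cons.mpr ⟨?_, hmap⟩
    intro hmem
    obtain ⟨q, hq, heq⟩ := List.mem_map.mp hmem
    obtain ⟨B, hB, rfl⟩ := hcs_mem q (List.mem_reverse.mp hq)
    exact hvdisj P1 (Finset.mem_union_right _ hP1) B (Finset.mem_union_left _ hB)
      (Ne.symm (hCSPS B hB P1 hP1)) (pv P1) (cf B).1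
      (pathD_vsub x₀ v₀ c c' (hpp P1 hP1)) (cycD_vsub x₀ v₀ c c' (hcf B hB))
      (getD_mem (by omega) _) (heq ▸ hhead_mem _ (hcs_mem' B hB))
  have hRlen : (resVS v₀ cs (pv P1)).length = (resXS x₀ cs).length + 1 := by
    simp [resVS, resXS]
  -- case split
  rcases Nat.lt_or_ge t 2 with hlt | hge
  · -- t = 1
    have ht1 : t = 1 := by omega
    have hps1nil : ps1 = [] := by
      rw [hps1] at hps_len
      simp at hps_len
      exact List.length_eq_zero_iff.mp (by omega)
    have hPSonly : ∀ B ∈ PS, B = P1 := by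
      intro B hB
      have hm : B ∈ PS.toList := Finset.mem_toList.mpr hB
      rw [hps1, hps1nil] at hm
      simpa using hm
    have hdisjKC : (([] : List (Fin k)) :: pv P1 :: cs.map Prod.fst).Pairwise List.Disjoint := by
      refine List.pairwise_cons.mpr ⟨fun l _ => by simp [List.Disjoint],
        List.pairwise_cons.mpr ⟨?_, hblocks_pw⟩⟩
      intro l hl
      obtain ⟨q, hq, rfl⟩ := List.mem_map.mp hl
      obtain ⟨B, hB, rfl⟩ := hcs_mem q hq
      exact hvdisj P1 (Finset.mem_union_right _ hP1) B (Finset.mem_union_left _ hB)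
        (Ne.symm (hCSPS B hB P1 hP1)) _ _ (pathD_vsub x₀ v₀ c c' (hpp P1 hP1))
        (cycD_vsub x₀ v₀ c c' (hcf B hB))
    have KC := key x₀ v₀ c cs h1nd h1len h1src [] [] rfl List.nodup_nil
      (by intro i hi; simp at hi) hcs_ok hdisjKC
    set d1 := stepc (keyVS [] cs (pv P1)) (keyXS ([] : List X) cs (px P1)) c with hd1def
    have hXSmem : ∀ x : X, x ∈ keyXS ([] : List X) cs (px P1) ↔
        (∃ q ∈ cs, x ∈ q.2) ∨ x ∈ px P1 := by
      intro x
      simp only [keyXS, List.nil_append, List.mem_append, List.mem_flatten, List.mem_map]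
      constructor
      · rintro (⟨l, ⟨q, hq, rfl⟩, hxl⟩ | h)
        · exact Or.inl ⟨q, hq, hxl⟩
        · exact Or.inr h
      · rintro (⟨q, hq, hxq⟩ | h)
        · exact Or.inl ⟨q.2, ⟨q, hq, rfl⟩, hxq⟩
        · exact Or.inr h
    have hXSne : keyXS ([] : List X) cs (px P1) ≠ [] := by
      simp only [keyXS, List.nil_append]
      intro h
      exact h1ne (List.append_eq_nil_iff.mp h).2
    have move1 : IsSequentialMove c d1 := move_of_step x₀ v₀ KC.nodup KC.len hXSne KC.src
    have hoffeq : ∀ x, x ∉ keyXS ([] : List X) cs (px P1) → c x = c' x := by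
      intro x hx
      by_contra hne
      obtain ⟨B, hB, hxB⟩ := hcov x hne
      rcases Finset.mem_union.mp hB with hBc | hBp
      · exact hx ((hXSmem x).mpr (Or.inl ⟨cf B, hcs_mem' B hBc,
          List.mem_toFinset.mp (((hcf B hBc).2.2.2.1).symm ▸ hxB)⟩))
      · have hBP := hPSonly B hBp
        subst hBP
        exact hx ((hXSmem x).mpr (Or.inr (List.mem_toFinset.mp (h1B.symm ▸ hxB))))
    rcases eq_or_ne cs [] with hcsnil | hcsne
    · -- one move suffices
      have hd1c' : d1 = c' := by
        funext x
        by_cases hx : x ∈ keyXS ([] : List X) cs (px P1)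
        · obtain ⟨i, hi, hieq⟩ := mem_getD hx x₀
          have hXX : keyXS ([] : List X) cs (px P1) = px P1 := by simp [keyXS, hcsnil]
          have hixs : i < (px P1).length := by rw [hXX] at hi; exact hi
          have h2 := KC.tail i (by omega)
          rw [← hd1def] at h2
          rw [← hieq, hXX, h2]
          exact (h1tgt i hixs).symm
        · rw [hd1def, stepc_not_mem KC.len hx]
          exact hoffeq x hx
      refine le_trans (transDist_le 1 (fun n => if n = 0 then c else c') (by simp) (by simp) ?_) (by omega)
      intro i hi
      have : i = 0 := by omega
      subst this
      simp only [if_pos rfl, if_neg one_ne_zero]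
      exact Or.inr (hd1c' ▸ move1)
    · -- two moves
      have hRXSne : resXS x₀ cs ≠ [] := by
        simp [resXS]
        exact hcsne
      have hres_src : ∀ i < (resXS x₀ cs).length,
          d1 ((resXS x₀ cs).getD i x₀) = (resVS v₀ cs (pv P1)).getD i v₀ := by
        intro i hi
        have := KC.res i (by simpa [resXS] using hi)
        rw [← hd1def] at this
        exact this
      set c2 := stepc (resVS v₀ cs (pv P1)) (resXS x₀ cs) d1 with hc2def
      have move2 : IsSequentialMove d1 c2 :=
        move_of_step x₀ v₀ hRVSnd hRlen hRXSne hres_src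
      have hRXSnd : (resXS x₀ cs).Nodup := nodup_of_src x₀ v₀ hRVSnd hRlen hres_src
      have hRXSmem : ∀ x ∈ resXS x₀ cs, ∃ q ∈ cs, x = q.2.getD (q.2.length - 1) x₀ := by
        intro x hx
        obtain ⟨q, hq, heq⟩ := List.mem_map.mp hx
        exact ⟨q, List.mem_reverse.mp hq, heq.symm⟩
      have hc2c' : c2 = c' := by
        funext x
        by_cases hx2 : x ∈ resXS x₀ cs
        · -- closing item
          obtain ⟨i, hi, hieq⟩ := mem_getD hx2 x₀
          have hstep := stepc_getD x₀ v₀ (c := d1) hRXSnd hRlen hi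
          rw [← hc2def, hieq] at hstep
          have hilen : i < cs.length := by simpa [resXS] using hi
          have hgetx : (resXS x₀ cs).getD i x₀
              = (cs.reverse[i]'(by simpa using hilen)).2.getD
                ((cs.reverse[i]'(by simpa using hilen)).2.length - 1) x₀ := by
            rw [resXS, List.getD_eq_getElem _ _ (by simpa [resXS] using hi), List.getElem_map]
          have hqmem : cs.reverse[i]'(by simpa using hilen) ∈ cs := by
            rw [← List.mem_reverse]
            exact List.getElem_mem _
          set q := cs.reverse[i]'(by simpa using hilen) with hqdef
          have hvstep : (resVS v₀ cs (pv P1)).getD (i+1) v₀ = q.1.getD 0 v₀ := by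
            rw [resVS]
            rw [List.getD_cons_succ]
            rw [List.getD_eq_getElem _ _ (by simpa using hilen), List.getElem_map]
          have hlast := hcs_tgt q hqmem (q.2.length - 1) (by have := hq2pos q hqmem; omega)
          have hmod : (q.2.length - 1 + 1) % q.1.length = 0 := by
            have h2 := (hcs_ok q hqmem).2.1
            have h3 := hq2pos q hqmem
            rw [(by omega : q.2.length - 1 + 1 = q.1.length)]
            exact Nat.mod_self _
          rw [hmod] at hlast
          rw [hstep, hvstep, ← hieq, hgetx, hlast]
        · by_cases hx : x ∈ keyXS ([] : List X) cs (px P1)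
          · have hc2d1 : c2 x = d1 x := by
              rw [hc2def]; exact stepc_not_mem hRlen hx2
            rcases (hXSmem x).mp hx with ⟨q, hq, hxq⟩ | hx1
            · -- non-closing cycle item
              obtain ⟨i, hi, hieq⟩ := mem_getD hxq x₀
              have hine : i ≠ q.2.length - 1 := by
                intro h
                apply hx2
                rw [resXS, List.mem_map]
                exact ⟨q, List.mem_reverse.mpr hq, by rw [← h, hieq]⟩
              have hi1 : i + 1 < q.2.length := by have := hq2pos q hq; omega
              have hmid := KC.mid q hq i hi1
              rw [← hd1def] at hmid
              have htg := hcs_tgt q hq i hi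
              have hmod : (i+1) % q.1.length = i + 1 :=
                Nat.mod_eq_of_lt (by rw [(hcs_ok q hq).2.1]; omega)
              rw [hmod] at htg
              rw [hc2d1, ← hieq, hmid, htg]
            · -- path item
              obtain ⟨i, hi, hieq⟩ := mem_getD hx1 x₀
              have h2 := KC.tail i (by omega)
              rw [← hd1def] at h2
              rw [hc2d1, ← hieq, h2]
              exact (h1tgt i hi).symm
          · rw [hc2def, stepc_not_mem hRlen hx2, hd1def, stepc_not_mem KC.len hx]
            exact hoffeq x hx
      refine le_trans (transDist_le 2
        (fun n => if n = 0 then c else if n = 1 then d1 else c') (by simp) (by simp) ?_) (by omega)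
      intro i hi
      interval_cases i
      · simpa [IsMove] using Or.inr move1
      · simpa [IsMove] using Or.inr (hc2c' ▸ move2)
  · -- t >= 2
    obtain ⟨P2, ps2, hps2⟩ := List.exists_cons_of_ne_nil
      (show ps1 ≠ [] by intro h; rw [hps1, h] at hps_len; simp at hps_len; omega)
    have hP2 : P2 ∈ PS := Finset.mem_toList.mp (by rw [hps1, hps2]; simp)
    have hP12 : P1 ≠ P2 := by
      have hnd := hps_nd
      rw [hps1, hps2] at hnd
      rcases List.pairwise_cons.mp hnd with ⟨hh, -⟩
      exact hh P2 (by simp)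
    have hps2sub : ∀ Q ∈ ps2, Q ∈ PS := by
      intro Q hQ
      refine Finset.mem_toList.mp ?_
      rw [hps1, hps2]
      simp [hQ]
    have hps2P1 : P1 ∉ ps2 := by
      have hnd := hps_nd
      rw [hps1, hps2] at hnd
      rcases List.pairwise_cons.mp hnd with ⟨hh, -⟩
      intro hmem
      exact hh P1 (by simp [hmem]) rfl
    have hps2P2 : P2 ∉ ps2 := by
      have hnd := hps_nd
      rw [hps1, hps2] at hnd
      rcases List.pairwise_cons.mp (List.pairwise_cons.mp hnd).2 with ⟨hh, -⟩
      intro hmem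
      exact hh P2 hmem rfl
    have hps2nd : ps2.Nodup := by
      have hnd := hps_nd
      rw [hps1, hps2] at hnd
      exact (List.pairwise_cons.mp (List.pairwise_cons.mp hnd).2).2
    obtain ⟨h2nd, h2len, h2ne, h2B, h2src, h2tgt⟩ := hpp P2 hP2
    have h2pos : 0 < (px P2).length := List.length_pos_iff.mpr h2ne
    have hzs_nd : (px P2).Nodup := nodup_of_src x₀ v₀ h2nd h2len h2src
    have hqitem : ∀ q ∈ cs, ∀ x ∈ q.2, ∃ B ∈ CS, x ∈ B := by
      intro q hq x hx
      obtain ⟨B, hB, rfl⟩ := hcs_mem q hq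
      exact ⟨B, hB, ((hcf B hB).2.2.2.1) ▸ (List.mem_toFinset.mpr hx)⟩
    have hxP1 : ∀ x ∈ px P1, x ∈ P1 := pathD_xmem x₀ v₀ c c' (hpp P1 hP1)
    have hxP2 : ∀ x ∈ px P2, x ∈ P2 := pathD_xmem x₀ v₀ c c' (hpp P2 hP2)
    have hdisjKC : ([(pv P2).getD 0 v₀] :: pv P1 :: cs.map Prod.fst).Pairwise List.Disjoint := by
      refine List.pairwise_cons.mpr ⟨?_, List.pairwise_cons.mpr ⟨?_, hblocks_pw⟩⟩
      · intro l hl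
        rw [List.singleton_disjoint]
        rcases List.mem_cons.mp hl with rfl | hl'
        · intro hmem
          exact hvdisj P2 (Finset.mem_union_right _ hP2) P1 (Finset.mem_union_right _ hP1)
            (Ne.symm hP12) (pv P2) (pv P1) (pathD_vsub x₀ v₀ c c' (hpp P2 hP2))
            (pathD_vsub x₀ v₀ c c' (hpp P1 hP1)) (getD_mem (by omega) _) hmem
        · obtain ⟨q, hq, rfl⟩ := List.mem_map.mp hl'
          obtain ⟨B, hB, rfl⟩ := hcs_mem q hq
          intro hmem
          exact hvdisj P2 (Finset.mem_union_right _ hP2) B (Finset.mem_union_left _ hB)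
            (Ne.symm (hCSPS B hB P2 hP2)) (pv P2) (cf B).1
            (pathD_vsub x₀ v₀ c c' (hpp P2 hP2)) (cycD_vsub x₀ v₀ c c' (hcf B hB))
            (getD_mem (by omega) _) hmem
      · intro l hl
        obtain ⟨q, hq, rfl⟩ := List.mem_map.mp hl
        obtain ⟨B, hB, rfl⟩ := hcs_mem q hq
        exact hvdisj P1 (Finset.mem_union_right _ hP1) B (Finset.mem_union_left _ hB)
          (Ne.symm (hCSPS B hB P1 hP1)) _ _ (pathD_vsub x₀ v₀ c c' (hpp P1 hP1))
          (cycD_vsub x₀ v₀ c c' (hcf B hB))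
    have KC := key x₀ v₀ c cs h1nd h1len h1src [(pv P2).getD 0 v₀] [(px P2).getD 0 x₀]
      rfl (by simp)
      (by
        intro i hi
        have hi0 : i = 0 := by simpa using hi
        subst hi0
        simp only [List.getD_cons_zero]
        exact h2src 0 h2pos)
      hcs_ok hdisjKC
    set d1 := stepc (keyVS [(pv P2).getD 0 v₀] cs (pv P1))
      (keyXS [(px P2).getD 0 x₀] cs (px P1)) c with hd1def
    have hXSmem : ∀ x : X, x ∈ keyXS [(px P2).getD 0 x₀] cs (px P1) ↔
        x = (px P2).getD 0 x₀ ∨ (∃ q ∈ cs, x ∈ q.2) ∨ x ∈ px P1 := by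
      intro x
      simp only [keyXS, List.cons_append, List.nil_append, List.mem_cons, List.mem_append,
        List.mem_flatten, List.mem_map]
      constructor
      · rintro (rfl | ⟨l, ⟨q, hq, rfl⟩, hxl⟩ | h)
        · exact Or.inl rfl
        · exact Or.inr (Or.inl ⟨q, hq, hxl⟩)
        · exact Or.inr (Or.inr h)
      · rintro (rfl | ⟨q, hq, hxq⟩ | h)
        · exact Or.inl rfl
        · exact Or.inr (Or.inl ⟨q.2, ⟨q, hq, rfl⟩, hxq⟩)
        · exact Or.inr (Or.inr h)
    have hXSne : keyXS [(px P2).getD 0 x₀] cs (px P1) ≠ [] := by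
      simp [keyXS]
    have move1 : IsSequentialMove c d1 := move_of_step x₀ v₀ KC.nodup KC.len hXSne KC.src
    -- second move data
    have hlrx : (resXS x₀ cs).length = cs.length := by simp [resXS]
    have hlrv : (resVS v₀ cs (pv P1)).length = cs.length + 1 := by simp [resVS]
    have hR2len : (resVS v₀ cs (pv P1) ++ (pv P2).drop 1).length
        = (resXS x₀ cs ++ px P2).length + 1 := by
      simp only [List.length_append, List.length_drop, hlrx, hlrv]
      omega
    have hRVS_sub : ∀ a ∈ resVS v₀ cs (pv P1),
        ∃ B ∈ CS ∪ PS, B ≠ P2 ∧ a ∈ B.image c ∪ B.image c' := by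
      intro a ha
      rcases List.mem_cons.mp ha with rfl | hmem
      · exact ⟨P1, Finset.mem_union_right _ hP1, hP12,
          pathD_vsub x₀ v₀ c c' (hpp P1 hP1) _ (getD_mem (by omega) _)⟩
      · obtain ⟨q, hq, rfl⟩ := List.mem_map.mp hmem
        obtain ⟨B, hB, rfl⟩ := hcs_mem q (List.mem_reverse.mp hq)
        exact ⟨B, Finset.mem_union_left _ hB, hCSPS B hB P2 hP2,
          cycD_vsub x₀ v₀ c c' (hcf B hB) _ (hhead_mem _ (hcs_mem' B hB))⟩
    have hR2nd : (resVS v₀ cs (pv P1) ++ (pv P2).drop 1).Nodup := by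
      refine List.nodup_append'.mpr ⟨hRVSnd, h2nd.sublist (List.drop_sublist _ _), ?_⟩
      intro a ha ha'
      obtain ⟨B, hB, hne, haB⟩ := hRVS_sub a ha
      have h := hdisj B hB P2 (Finset.mem_union_right _ hP2) hne
      rw [Finset.disjoint_left] at h
      exact h haB (pathD_vsub x₀ v₀ c c' (hpp P2 hP2) a (List.mem_of_mem_drop ha'))
    have hR2ne : resXS x₀ cs ++ px P2 ≠ [] := by
      intro h
      exact h2ne (List.append_eq_nil_iff.mp h).2
    have hRXSmem : ∀ x ∈ resXS x₀ cs, ∃ q ∈ cs, x = q.2.getD (q.2.length - 1) x₀ := by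
      intro x hx
      obtain ⟨q, hq, heq⟩ := List.mem_map.mp hx
      exact ⟨q, List.mem_reverse.mp hq, heq.symm⟩
    have hznotin : ∀ j, 0 < j → j < (px P2).length →
        (px P2).getD j x₀ ∉ keyXS [(px P2).getD 0 x₀] cs (px P1) := by
      intro j hj0 hjlen hmem
      rcases (hXSmem _).mp hmem with heq | ⟨q, hq, hxq⟩ | hx1
      · have := getD_pos_unique hzs_nd x₀ hjlen h2pos heq
        omega
      · obtain ⟨B, hB, hxB⟩ := hqitem q hq _ hxq
        exact hitem B (Finset.mem_union_left _ hB) P2 (Finset.mem_union_right _ hP2)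
          (hCSPS B hB P2 hP2) _ hxB (hxP2 _ (getD_mem hjlen _))
      · exact hitem P1 (Finset.mem_union_right _ hP1) P2 (Finset.mem_union_right _ hP2)
          hP12 _ (hxP1 _ hx1) (hxP2 _ (getD_mem hjlen _))
    have hsrc2 : ∀ i < (resXS x₀ cs ++ px P2).length,
        d1 ((resXS x₀ cs ++ px P2).getD i x₀)
          = (resVS v₀ cs (pv P1) ++ (pv P2).drop 1).getD i v₀ := by
      intro i hi
      rw [List.length_append, hlrx] at hi
      rcases lt_or_ge i cs.length with h | h
      · rw [getD_left (by omega : i < (resXS x₀ cs).length),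
          getD_left (by omega : i < (resVS v₀ cs (pv P1)).length)]
        have hr := KC.res i h
        rw [← hd1def] at hr
        exact hr
      · rw [getD_right (l := resXS x₀ cs) (by omega)
          (by omega : i - cs.length = i - (resXS x₀ cs).length)]
        rcases Nat.eq_zero_or_pos (i - cs.length) with hj0 | hjpos
        · have hieq : i = cs.length := by omega
          rw [hj0, hieq]
          rw [getD_left (by omega : cs.length < (resVS v₀ cs (pv P1)).length)]
          have hpre := KC.pre 0 (by simp)
          rw [← hd1def] at hpre
          simp only [List.getD_cons_zero] at hpre
          rw [hpre]
          have hre := KC.resend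
          simp only [List.length_cons, List.length_nil] at hre
          exact hre.symm
        · have hnotin := hznotin (i - cs.length) hjpos (by omega)
          rw [hd1def, stepc_not_mem KC.len hnotin]
          rw [h2src (i - cs.length) (by omega)]
          rw [getD_right (l := resVS v₀ cs (pv P1)) (by omega)
            (by omega : i - cs.length - 1 = i - (resVS v₀ cs (pv P1)).length)]
          rw [getD_drop_one (by omega : i - cs.length - 1 + 1 < (pv P2).length)]
          congr 1
          omega
    set c2 := stepc (resVS v₀ cs (pv P1) ++ (pv P2).drop 1) (resXS x₀ cs ++ px P2) d1
      with hc2def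
    have move2 : IsSequentialMove d1 c2 := move_of_step x₀ v₀ hR2nd hR2len hR2ne hsrc2
    have hXS2nd : (resXS x₀ cs ++ px P2).Nodup := nodup_of_src x₀ v₀ hR2nd hR2len hsrc2
    have hc2a : ∀ x, (x ∈ px P1 ∨ x ∈ px P2 ∨ ∃ q ∈ cs, x ∈ q.2) → c2 x = c' x := by
      intro x hx
      rcases hx with hx1 | hx2 | ⟨q, hq, hxq⟩
      · have hnr : x ∉ resXS x₀ cs ++ px P2 := by
          intro hmem
          rcases List.mem_append.mp hmem with hr | hp
          · obtain ⟨q, hq, rfl⟩ := hRXSmem x hr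
            obtain ⟨B, hB, hxB⟩ := hqitem q hq _
              (getD_mem (l := q.2) (i := q.2.length - 1) (by have := hq2pos q hq; omega) x₀)
            exact hitem B (Finset.mem_union_left _ hB) P1 (Finset.mem_union_right _ hP1)
              (hCSPS B hB P1 hP1) _ hxB (hxP1 _ hx1)
          · exact hitem P1 (Finset.mem_union_right _ hP1) P2 (Finset.mem_union_right _ hP2)
              hP12 _ (hxP1 _ hx1) (hxP2 _ hp)
        have hc2d1 : c2 x = d1 x := by rw [hc2def]; exact stepc_not_mem hR2len hnr
        obtain ⟨i, hi, hieq⟩ := mem_getD hx1 x₀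
        have h2 := KC.tail i (by omega)
        rw [← hd1def] at h2
        rw [hc2d1, ← hieq, h2]
        exact (h1tgt i hi).symm
      · obtain ⟨j, hj, hjeq⟩ := mem_getD hx2 x₀
        have hpos : (resXS x₀ cs ++ px P2).getD (cs.length + j) x₀ = x := by
          rw [getD_right (l := resXS x₀ cs) (by rw [hlrx]; omega)
            (by rw [hlrx]; omega : j = cs.length + j - (resXS x₀ cs).length)]
          exact hjeq
        have hstep := stepc_getD x₀ v₀ (c := d1) hXS2nd hR2len
          (i := cs.length + j) (by rw [List.length_append, hlrx]; omega)
        rw [hpos, ← hc2def] at hstep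
        rw [hstep]
        rw [getD_right (l := resVS v₀ cs (pv P1)) (by rw [hlrv]; omega)
          (by rw [hlrv]; omega : j = cs.length + j + 1 - (resVS v₀ cs (pv P1)).length)]
        rw [getD_drop_one (by omega : j + 1 < (pv P2).length)]
        rw [← hjeq]
        exact (h2tgt j hj).symm
      · by_cases hclos : x ∈ resXS x₀ cs
        · obtain ⟨i, hi, hieq⟩ := mem_getD hclos x₀
          have hilen : i < cs.length := by rw [hlrx] at hi; exact hi
          have hpos : (resXS x₀ cs ++ px P2).getD i x₀ = x := by
            rw [getD_left (by rw [hlrx]; omega)]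
            exact hieq
          have hstep := stepc_getD x₀ v₀ (c := d1) hXS2nd hR2len
            (i := i) (by rw [List.length_append, hlrx]; omega)
          rw [hpos, ← hc2def] at hstep
          rw [hstep]
          rw [getD_left (by rw [hlrv]; omega : i + 1 < (resVS v₀ cs (pv P1)).length)]
          have hgetx : (resXS x₀ cs).getD i x₀
              = (cs.reverse[i]'(by simpa using hilen)).2.getD
                ((cs.reverse[i]'(by simpa using hilen)).2.length - 1) x₀ := by
            rw [resXS, List.getD_eq_getElem _ _ (by simpa [resXS] using hilen), List.getElem_map]
          have hqmem : cs.reverse[i]'(by simpa using hilen) ∈ cs := by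
            rw [← List.mem_reverse]
            exact List.getElem_mem _
          set q' := cs.reverse[i]'(by simpa using hilen) with hqdef
          have hvstep : (resVS v₀ cs (pv P1)).getD (i+1) v₀ = q'.1.getD 0 v₀ := by
            rw [resVS, List.getD_cons_succ,
              List.getD_eq_getElem _ _ (by simpa using hilen), List.getElem_map]
          have hlast := hcs_tgt q' hqmem (q'.2.length - 1) (by have := hq2pos q' hqmem; omega)
          have hmod : (q'.2.length - 1 + 1) % q'.1.length = 0 := by
            have hq2 := (hcs_ok q' hqmem).2.1
            have hq3 := hq2pos q' hqmem
            rw [(by omega : q'.2.length - 1 + 1 = q'.1.length)]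
            exact Nat.mod_self _
          rw [hmod] at hlast
          rw [hvstep, ← hieq, hgetx, hlast]
        · obtain ⟨i, hi, hieq⟩ := mem_getD hxq x₀
          have hine : i ≠ q.2.length - 1 := by
            intro h
            apply hclos
            rw [resXS, List.mem_map]
            exact ⟨q, List.mem_reverse.mpr hq, by rw [← h, hieq]⟩
          have hi1 : i + 1 < q.2.length := by have := hq2pos q hq; omega
          have hnr : x ∉ resXS x₀ cs ++ px P2 := by
            intro hmem
            rcases List.mem_append.mp hmem with hr | hp
            · exact hclos hr
            · obtain ⟨B, hB, hxB⟩ := hqitem q hq x hxq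
              exact hitem B (Finset.mem_union_left _ hB) P2 (Finset.mem_union_right _ hP2)
                (hCSPS B hB P2 hP2) x hxB (hxP2 x hp)
          have hc2d1 : c2 x = d1 x := by rw [hc2def]; exact stepc_not_mem hR2len hnr
          have hmid := KC.mid q hq i hi1
          rw [← hd1def] at hmid
          have htg := hcs_tgt q hq i hi
          have hmod : (i+1) % q.1.length = i + 1 :=
            Nat.mod_eq_of_lt (by rw [(hcs_ok q hq).2.1]; omega)
          rw [hmod] at htg
          rw [hc2d1, ← hieq, hmid, htg]
    have hc2b : ∀ x, x ∉ px P1 → x ∉ px P2 → (∀ q ∈ cs, x ∉ q.2) → c2 x = c x := by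
      intro x h1 h2 h3
      have hnr : x ∉ resXS x₀ cs ++ px P2 := by
        intro hmem
        rcases List.mem_append.mp hmem with hr | hp
        · obtain ⟨q, hq, rfl⟩ := hRXSmem x hr
          exact h3 q hq (getD_mem (l := q.2) (i := q.2.length - 1)
            (by have := hq2pos q hq; omega) x₀)
        · exact h2 hp
      have hnx : x ∉ keyXS [(px P2).getD 0 x₀] cs (px P1) := by
        intro hmem
        rcases (hXSmem x).mp hmem with heq | ⟨q, hq, hxq⟩ | hx1
        · exact h2 (heq ▸ getD_mem h2pos _)
        · exact h3 q hq hxq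
        · exact h1 hx1
      rw [hc2def, stepc_not_mem hR2len hnr, hd1def, stepc_not_mem KC.len hnx]
    -- fold over remaining paths
    set F : ℕ → X → Fin k := fun j =>
      ((ps2.take j).map (fun P => (pv P, px P))).foldl (fun cc p => stepc p.1 p.2 cc) c2
      with hFdef
    have hF0 : F 0 = c2 := by rw [hFdef]; rfl
    have hFstep : ∀ j, j < ps2.length →
        F (j+1) = stepc (pv (ps2.getD j P1)) (px (ps2.getD j P1)) (F j) := by
      intro j hj
      rw [List.getD_eq_getElem _ _ hj, hFdef]
      simp only
      rw [List.take_succ, List.getElem?_eq_getElem hj]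
      rw [List.map_append, List.foldl_append]
      simp only [Option.toList_some, List.map_cons, List.map_nil, List.foldl_cons,
        List.foldl_nil]
    have hinv : ∀ j, j ≤ ps2.length → ∀ x,
        ((x ∈ px P1 ∨ x ∈ px P2 ∨ (∃ q ∈ cs, x ∈ q.2) ∨ (∃ Q ∈ ps2.take j, x ∈ px Q))
          → F j x = c' x)
        ∧ (¬(x ∈ px P1 ∨ x ∈ px P2 ∨ (∃ q ∈ cs, x ∈ q.2) ∨ (∃ Q ∈ ps2.take j, x ∈ px Q))
          → F j x = c x) := by
      intro j
      induction j with
      | zero =>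
        intro _ x
        rw [hF0]
        constructor
        · intro h
          rcases h with h | h | h | ⟨Q, hQ, -⟩
          · exact hc2a x (Or.inl h)
          · exact hc2a x (Or.inr (Or.inl h))
          · exact hc2a x (Or.inr (Or.inr h))
          · simp at hQ
        · intro h
          push_neg at h
          exact hc2b x h.1 h.2.1 h.2.2.1
      | succ j ihj =>
        intro hj x
        have hjlt : j < ps2.length := by omega
        set Q := ps2.getD j P1 with hQdef
        have hQmem : Q ∈ ps2 := by rw [hQdef]; exact getD_mem hjlt _
        have hQPS : Q ∈ PS := hps2sub Q hQmem
        obtain ⟨hqnd, hqlen, hqne, hqB, hqsrc2, hqtgt⟩ := hpp Q hQPS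
        have hstep := hFstep j hjlt
        rw [← hQdef] at hstep
        constructor
        · intro hproc
          by_cases hxQ : x ∈ px Q
          · obtain ⟨i, hi, hieq⟩ := mem_getD hxQ x₀
            have hqxnd : (px Q).Nodup := nodup_of_src x₀ v₀ hqnd hqlen hqsrc2
            have hstep2 := stepc_getD x₀ v₀ (c := F j) hqxnd hqlen hi
            rw [hstep, ← hieq, hstep2]
            exact (hqtgt i hi).symm
          · have hFx : F (j+1) x = F j x := by rw [hstep]; exact stepc_not_mem hqlen hxQ
            rw [hFx]
            apply (ihj (by omega) x).1
            rcases hproc with h | h | h | ⟨Q', hQ', hxQ'⟩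
            · exact Or.inl h
            · exact Or.inr (Or.inl h)
            · exact Or.inr (Or.inr (Or.inl h))
            · have hQ'c : Q' ∈ ps2.take j ∨ Q' = Q := by
                rw [List.take_succ, List.getElem?_eq_getElem hjlt] at hQ'
                rcases List.mem_append.mp hQ' with h' | h'
                · exact Or.inl h'
                · right
                  have hq' : Q' = ps2[j] := by simpa using h'
                  rw [hQdef, List.getD_eq_getElem _ _ hjlt]
                  exact hq'
              rcases hQ'c with h' | rfl
              · exact Or.inr (Or.inr (Or.inr ⟨Q', h', hxQ'⟩))
              · exact absurd hxQ' hxQ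
        · intro hnproc
          have hxQ : x ∉ px Q := by
            intro h
            apply hnproc
            refine Or.inr (Or.inr (Or.inr ⟨Q, ?_, h⟩))
            rw [List.take_succ, List.getElem?_eq_getElem hjlt]
            refine List.mem_append.mpr (Or.inr ?_)
            simp only [Option.toList_some, List.mem_singleton]
            rw [hQdef]
            exact List.getD_eq_getElem _ _ hjlt
          have hFx : F (j+1) x = F j x := by rw [hstep]; exact stepc_not_mem hqlen hxQ
          rw [hFx]
          apply (ihj (by omega) x).2
          intro h
          apply hnproc
          rcases h with h | h | h | ⟨Q', hQ', hxQ'⟩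
          · exact Or.inl h
          · exact Or.inr (Or.inl h)
          · exact Or.inr (Or.inr (Or.inl h))
          · refine Or.inr (Or.inr (Or.inr ⟨Q', ?_, hxQ'⟩))
            rw [List.take_succ]
            exact List.mem_append.mpr (Or.inl hQ')
    have hmv : ∀ j, j < ps2.length → IsSequentialMove (F j) (F (j+1)) := by
      intro j hjlt
      set Q := ps2.getD j P1 with hQdef
      have hQmem : Q ∈ ps2 := by rw [hQdef]; exact getD_mem hjlt _
      have hQPS : Q ∈ PS := hps2sub Q hQmem
      obtain ⟨hqnd, hqlen, hqne, hqB, hqsrc2, hqtgt⟩ := hpp Q hQPS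
      have hxQmem : ∀ y ∈ px Q, y ∈ Q := pathD_xmem x₀ v₀ c c' (hpp Q hQPS)
      have hQne1 : Q ≠ P1 := by intro h; exact hps2P1 (h ▸ hQmem)
      have hQne2 : Q ≠ P2 := by intro h; exact hps2P2 (h ▸ hQmem)
      have hQtake : ∀ Q' ∈ ps2.take j, Q ≠ Q' := by
        intro Q' hQ' h
        obtain ⟨i2, hi2, hgt⟩ := List.mem_iff_getElem.mp hQ'
        have hl2 : i2 < j := by
          rw [List.length_take] at hi2
          omega
        have hi2' : i2 < ps2.length := by omega
        rw [List.getElem_take] at hgt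
        have hQj : ps2[j]'hjlt = Q := by rw [hQdef, List.getD_eq_getElem _ _ hjlt]
        have heq2 : ps2[i2]'hi2' = ps2[j]'hjlt := by rw [hgt, hQj, h]
        have := hps2nd.getElem_inj_iff.mp heq2
        omega
      have hsrcQ : ∀ i < (px Q).length, F j ((px Q).getD i x₀) = (pv Q).getD i v₀ := by
        intro i hi
        have hymem : (px Q).getD i x₀ ∈ px Q := getD_mem hi _
        have hnot : ¬((px Q).getD i x₀ ∈ px P1 ∨ (px Q).getD i x₀ ∈ px P2 ∨
            (∃ q ∈ cs, (px Q).getD i x₀ ∈ q.2) ∨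
            (∃ Q' ∈ ps2.take j, (px Q).getD i x₀ ∈ px Q')) := by
          rintro (h | h | ⟨q, hq, hxq⟩ | ⟨Q', hQ', hxQ'⟩)
          · exact hitem Q (Finset.mem_union_right _ hQPS) P1 (Finset.mem_union_right _ hP1)
              hQne1 _ (hxQmem _ hymem) (hxP1 _ h)
          · exact hitem Q (Finset.mem_union_right _ hQPS) P2 (Finset.mem_union_right _ hP2)
              hQne2 _ (hxQmem _ hymem) (hxP2 _ h)
          · obtain ⟨B, hB, hxB⟩ := hqitem q hq _ hxq
            exact hitem Q (Finset.mem_union_right _ hQPS) B (Finset.mem_union_left _ hB)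
              (Ne.symm (hCSPS B hB Q hQPS)) _ (hxQmem _ hymem) hxB
          · have hQ'PS : Q' ∈ PS := hps2sub Q' (List.mem_of_mem_take hQ')
            exact hitem Q (Finset.mem_union_right _ hQPS) Q' (Finset.mem_union_right _ hQ'PS)
              (hQtake Q' hQ') _ (hxQmem _ hymem)
              (pathD_xmem x₀ v₀ c c' (hpp Q' hQ'PS) _ hxQ')
        have hFj := (hinv j (by omega) _).2 hnot
        rw [hFj]
        exact hqsrc2 i hi
      have hstep := hFstep j hjlt
      rw [← hQdef] at hstep
      rw [hstep]
      exact move_of_step x₀ v₀ hqnd hqlen hqne hsrcQ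
    have hfin : F ps2.length = c' := by
      funext x
      by_cases hproc : (x ∈ px P1 ∨ x ∈ px P2 ∨ (∃ q ∈ cs, x ∈ q.2)
          ∨ ∃ Q ∈ ps2.take ps2.length, x ∈ px Q)
      · exact (hinv ps2.length le_rfl x).1 hproc
      · rw [(hinv ps2.length le_rfl x).2 hproc]
        by_contra hne
        obtain ⟨B, hB, hxB⟩ := hcov x hne
        apply hproc
        rcases Finset.mem_union.mp hB with hBc | hBp
        · exact Or.inr (Or.inr (Or.inl ⟨cf B, hcs_mem' B hBc,
            List.mem_toFinset.mp (((hcf B hBc).2.2.2.1).symm ▸ hxB)⟩))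
        · have hBl : B ∈ PS.toList := Finset.mem_toList.mpr hBp
          rw [hps1, hps2] at hBl
          rcases List.mem_cons.mp hBl with rfl | hBl2
          · exact Or.inl (List.mem_toFinset.mp (h1B.symm ▸ hxB))
          rcases List.mem_cons.mp hBl2 with rfl | hBl3
          · exact Or.inr (Or.inl (List.mem_toFinset.mp (h2B.symm ▸ hxB)))
          · exact Or.inr (Or.inr (Or.inr ⟨B, by simpa [List.take_length] using hBl3,
              List.mem_toFinset.mp (((hpp B hBp).2.2.2.1).symm ▸ hxB)⟩))
    have hlent : t = ps2.length + 2 := by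
      rw [hps1, hps2] at hps_len
      simp at hps_len
      omega
    refine le_trans (transDist_le t
      (fun n => if n = 0 then c else if n = 1 then d1 else F (n - 2)) (by simp) ?_ ?_)
      (le_max_right _ _)
    · rw [if_neg (by omega), if_neg (by omega), (by omega : t - 2 = ps2.length), hfin]
    · intro i hi
      rcases Nat.lt_or_ge i 2 with h2i | h2i
      · interval_cases i
        · simpa [IsMove] using Or.inr move1
        · have e1 : (fun n => if n = 0 then c else if n = 1 then d1 else F (n - 2)) 1 = d1 := by
            norm_num
          have e2 : (fun n => if n = 0 then c else if n = 1 then d1 else F (n - 2)) 2 = c2 := by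
            norm_num [hF0]
          beta_reduce at e1 e2
          rw [e1, e2]
          exact Or.inr move2
      · have e1 : (fun n => if n = 0 then c else if n = 1 then d1 else F (n - 2)) i
            = F (i - 2) := by
          simp only
          rw [if_neg (by omega), if_neg (by omega)]
        have e2 : (fun n => if n = 0 then c else if n = 1 then d1 else F (n - 2)) (i + 1)
            = F (i - 2 + 1) := by
          simp only
          rw [if_neg (by omega), if_neg (by omega), (by omega : i + 1 - 2 = i - 2 + 1)]
        beta_reduce at e1 e2
        rw [e1, e2]
        exact Or.inr (hmv (i - 2) (by omega))
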